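/- Let G=(V,E) be a cubic graph with |V|=n and let (H,λ) be the temporal graph obtained from G (and a proper 4-edge-coloring c of G) by the Construction. Let μ_2 be the maximum cardinality of a 2-temporal matching of (H,λ) and let α be the maximum cardinality of an independent set of G. Then μ_2 = α + 3n/2. -/

import Mathlib

variable {V : Type*}

/-- The underlying (static) graph of a temporal graph given by its time-labeling. -/
def ugraph (lab : Sym2 V → Finset ℕ) : SimpleGraph V where
  Adj x y := x ≠ y ∧ (lab s(x, y)).Nonempty
  symm := by
    constructor
    intro x y h
    exact ⟨h.1.symm, by rw [Sym2.eq_swap]; exact h.2⟩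
  loopless := by constructor; intro x h; exact h.1 rfl

/-- `(e, t)` is a time edge of the temporal graph given by `lab`. -/
def IsTimeEdge (lab : Sym2 V → Finset ℕ) (p : Sym2 V × ℕ) : Prop :=
  ¬ p.1.IsDiag ∧ p.2 ∈ lab p.1

/-- Two time edges are Δ-independent: edges disjoint or labels at least Δ apart. -/
def DIndep (Δ : ℕ) (p q : Sym2 V × ℕ) : Prop :=
  (∀ v, v ∈ p.1 → v ∉ q.1) ∨ Δ ≤ ((p.2 : ℤ) - (q.2 : ℤ)).natAbs

/-- A Δ-temporal matching. -/
def IsTM (lab : Sym2 V → Finset ℕ) (Δ : ℕ) (M : Finset (Sym2 V × ℕ)) : Prop :=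
  (∀ p ∈ M, IsTimeEdge lab p) ∧ ∀ p ∈ M, ∀ q ∈ M, p ≠ q → DIndep Δ p q

/-- μ_Δ: maximum cardinality of a Δ-temporal matching. -/
noncomputable def tmu (lab : Sym2 V → Finset ℕ) (Δ : ℕ) : ℕ :=
  sSup {k | ∃ M : Finset (Sym2 V × ℕ), IsTM lab Δ M ∧ M.card = k}

/-- The temporal graph has lifetime `T`. -/
def HasLifetime (lab : Sym2 V → Finset ℕ) (T : ℕ) : Prop :=
  (∀ e, ∀ t ∈ lab e, 1 ≤ t ∧ t ≤ T) ∧ ∃ e : Sym2 V, ¬ e.IsDiag ∧ T ∈ lab e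

/-- The snapshot at time `t`. -/
def tsnapshot (lab : Sym2 V → Finset ℕ) (t : ℕ) : SimpleGraph V where
  Adj x y := x ≠ y ∧ t ∈ lab s(x, y)
  symm := by
    constructor
    intro x y h
    exact ⟨h.1.symm, by rw [Sym2.eq_swap]; exact h.2⟩
  loopless := by constructor; intro x h; exact h.1 rfl

/-- 𝒢|_S : keep only time edges with label in `S`. -/
def trestrict (lab : Sym2 V → Finset ℕ) (S : Finset ℕ) : Sym2 V → Finset ℕ :=
  fun e => lab e ∩ S

/-- A finite matching of a static graph. -/
def IsMatchingF (G : SimpleGraph V) (R : Finset (Sym2 V)) : Prop :=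
  (∀ e ∈ R, e ∈ G.edgeSet) ∧ ∀ e ∈ R, ∀ e' ∈ R, e ≠ e' → ∀ v, v ∈ e → v ∉ e'

/-- ν(G): maximum cardinality of a matching. -/
noncomputable def matchNum (G : SimpleGraph V) : ℕ :=
  sSup {k | ∃ R : Finset (Sym2 V), IsMatchingF G R ∧ R.card = k}

/-- An independent set of a static graph. -/
def IsIndepF (G : SimpleGraph V) (S : Finset V) : Prop :=
  ∀ u ∈ S, ∀ v ∈ S, ¬ G.Adj u v

/-- α(G): maximum cardinality of an independent set. -/
noncomputable def indepNum (G : SimpleGraph V) : ℕ :=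
  sSup {k | ∃ S : Finset V, IsIndepF G S ∧ S.card = k}

/-- The Δ-temporal line graph: vertices are the time edges, two distinct time edges are
adjacent iff the edges share a vertex and the labels are less than Δ apart. -/
def tline (lab : Sym2 V → Finset ℕ) (Δ : ℕ) :
    SimpleGraph {p : Sym2 V × ℕ // IsTimeEdge lab p} where
  Adj p q := p ≠ q ∧ (∃ v, v ∈ p.1.1 ∧ v ∈ q.1.1) ∧ ((p.1.2 : ℤ) - (q.1.2 : ℤ)).natAbs < Δ
  symm := by
    constructor
    rintro p q ⟨hne, ⟨v, hv1, hv2⟩, hlt⟩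
    exact ⟨hne.symm, ⟨v, hv2, hv1⟩, by omega⟩
  loopless := by constructor; rintro p ⟨hne, -⟩; exact hne rfl

/-- The side `α ∈ {0,1}` (encoded as a `Bool`) of an edge `e`, determined by
`α ≡ c(e) (mod 2)` where `c(e) ∈ {1,2,3,4}` is the color of `e`. -/
def aV {V : Type*} (c : Sym2 V → ℕ) (e : Sym2 V) : Bool := c e % 2 == 1

/-- The time slot of the two edges incident to `w_e`: 1 if `c(e) ∈ {1,2}`, 3 if
`c(e) ∈ {3,4}`. -/
def tE {V : Type*} (c : Sym2 V → ℕ) (e : Sym2 V) : ℕ := if c e ≤ 2 then 1 else 3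

/-- `c` is a proper 4-edge-coloring of `G` with colors in `{1,2,3,4}`. -/
def ProperEC {V : Type*} (G : SimpleGraph V) (c : Sym2 V → ℕ) : Prop :=
  (∀ e ∈ G.edgeSet, 1 ≤ c e ∧ c e ≤ 4) ∧
  ∀ e ∈ G.edgeSet, ∀ e' ∈ G.edgeSet, e ≠ e' → (∃ v, v ∈ e ∧ v ∈ e') → c e ≠ c e'

/-- The time-labeling `lab` (on the vertex set `(V × Bool) ⊕ Sym2 V`, where
`(v, false)` plays the role of `v₀`, `(v, true)` of `v₁`, and `Sum.inr e` of `w_e`)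
is exactly the temporal graph `(H, λ)` of the Construction applied to `G` and `c`:
every edge `{v₀,v₁}` has label set `{2}`; for every edge `e` of `G` and each endpoint
`u ∈ e`, the edge `{w_e, u_α}` has label set `{tE c e}`; and no other pair carries
any label. -/
def IsConstruction {V : Type*} (G : SimpleGraph V) (c : Sym2 V → ℕ)
    (lab : Sym2 ((V × Bool) ⊕ Sym2 V) → Finset ℕ) : Prop :=
  (∀ v : V, lab s(Sum.inl (v, false), Sum.inl (v, true)) = {2}) ∧
  (∀ e ∈ G.edgeSet, ∀ u, u ∈ e →
    lab s(Sum.inr e, Sum.inl (u, aV c e)) = {tE c e}) ∧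
  (∀ f : Sym2 ((V × Bool) ⊕ Sym2 V), (lab f).Nonempty →
    (∃ v : V, f = s(Sum.inl (v, false), Sum.inl (v, true))) ∨
    (∃ e ∈ G.edgeSet, ∃ u, u ∈ e ∧ f = s(Sum.inr e, Sum.inl (u, aV c e))))


section Aux

variable {V : Type*}

/-- `{v₀, v₁}` as a `Sym2`. -/
abbrev vedge (v : V) : Sym2 ((V × Bool) ⊕ Sym2 V) :=
  s(Sum.inl (v, false), Sum.inl (v, true))

/-- `{w_e, u_α}` as a `Sym2`. -/
abbrev eedge (c : Sym2 V → ℕ) (e : Sym2 V) (u : V) : Sym2 ((V × Bool) ⊕ Sym2 V) :=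
  s(Sum.inr e, Sum.inl (u, aV c e))

lemma sym2_mk_out (e : Sym2 V) : s(e.out.1, e.out.2) = e := by
  rw [Sym2.mk, Prod.mk.eta, e.out_eq]

lemma color_eq_aux {x y : ℕ} (hx1 : 1 ≤ x) (hx4 : x ≤ 4) (hy1 : 1 ≤ y) (hy4 : y ≤ 4)
    (ht : (if x ≤ 2 then 1 else 3 : ℕ) = if y ≤ 2 then 1 else 3)
    (ha : (x % 2 == 1) = (y % 2 == 1)) : x = y := by
  have ha' : x % 2 = 1 ↔ y % 2 = 1 := by simpa using congrArg (· = true) ha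
  split_ifs at ht <;> omega

lemma tE_cases (c : Sym2 V → ℕ) (e : Sym2 V) : tE c e = 1 ∨ tE c e = 3 := by
  unfold tE; split <;> simp

lemma mem_vedge_side (u : V) (b : Bool) :
    (Sum.inl (u, b) : (V × Bool) ⊕ Sym2 V) ∈ vedge u := by
  cases b <;> simp

lemma indep_le_indepNum [Fintype V] (G : SimpleGraph V) (S : Finset V) (h : IsIndepF G S) :
    S.card ≤ indepNum G :=
  le_csSup ⟨Fintype.card V, by rintro k ⟨S, -, rfl⟩; exact S.card_le_univ⟩ ⟨S, h, rfl⟩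

lemma exists_indep_card [Fintype V] (G : SimpleGraph V) :
    ∃ S : Finset V, IsIndepF G S ∧ S.card = indepNum G := by
  have h0 : (0 : ℕ) ∈ {k | ∃ S : Finset V, IsIndepF G S ∧ S.card = k} :=
    ⟨∅, fun u hu => absurd hu (Finset.notMem_empty u), rfl⟩
  have hb : BddAbove {k | ∃ S : Finset V, IsIndepF G S ∧ S.card = k} :=
    ⟨Fintype.card V, by rintro k ⟨S, -, rfl⟩; exact S.card_le_univ⟩
  exact Nat.sSup_mem ⟨0, h0⟩ hb

/-- A set `T` with all its internal edges contained in `F` has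
`|T| ≤ α(G) + |F|`. -/
lemma card_le_indep_add [Fintype V] [DecidableEq V] (G : SimpleGraph V)
    [DecidableRel G.Adj] (T : Finset V) (F : Finset (Sym2 V))
    (hF : ∀ e ∈ G.edgeFinset, (∀ v ∈ e, v ∈ T) → e ∈ F) :
    T.card ≤ indepNum G + F.card := by
  classical
  induction T using Finset.strongInduction generalizing F with
  | _ T ih =>
    by_cases hT : IsIndepF G T
    · exact (indep_le_indepNum G T hT).trans (Nat.le_add_right _ _)
    · unfold IsIndepF at hT
      push_neg at hT
      obtain ⟨u, hu, v, hv, hadj⟩ := hT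
      have huv : s(u, v) ∈ F := by
        refine hF _ (SimpleGraph.mem_edgeFinset.2 hadj) ?_
        intro w hw
        rcases Sym2.mem_iff.1 hw with rfl | rfl <;> assumption
      have h1 := ih (T.erase u) (Finset.erase_ssubset hu) (F.erase s(u, v)) ?_
      · have h3 := Finset.card_erase_of_mem hu
        have h4 := Finset.card_erase_of_mem huv
        have h5 : 1 ≤ T.card := Finset.card_pos.2 ⟨u, hu⟩
        have h6 : 1 ≤ F.card := Finset.card_pos.2 ⟨_, huv⟩
        omega
      · intro e he hall
        refine Finset.mem_erase.2 ⟨?_, hF e he fun w hw => Finset.mem_of_mem_erase (hall w hw)⟩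
        intro h
        exact Finset.notMem_erase u T (hall u (h ▸ Sym2.mem_mk_left u v))

/-- Classification of time edges of the construction. -/
lemma classify {G : SimpleGraph V} {c : Sym2 V → ℕ}
    {lab : Sym2 ((V × Bool) ⊕ Sym2 V) → Finset ℕ} (hcons : IsConstruction G c lab)
    {p : Sym2 ((V × Bool) ⊕ Sym2 V) × ℕ} (hp : IsTimeEdge lab p) :
    (∃ v : V, p = (vedge v, 2)) ∨
    (∃ e ∈ G.edgeSet, ∃ u, u ∈ e ∧ p = (eedge c e u, tE c e)) := by
  obtain ⟨hd, ht⟩ := hp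
  rcases hcons.2.2 p.1 ⟨p.2, ht⟩ with ⟨v, hv⟩ | ⟨e, he, u, hu, hf⟩
  · left
    refine ⟨v, Prod.ext hv ?_⟩
    have h2 : p.2 ∈ lab s(Sum.inl (v, false), Sum.inl (v, true)) := hv ▸ ht
    rw [hcons.1 v] at h2
    simpa using h2
  · right
    refine ⟨e, he, u, hu, Prod.ext hf ?_⟩
    have h2 : p.2 ∈ lab s(Sum.inr e, Sum.inl (u, aV c e)) := hf ▸ ht
    rw [hcons.2.1 e he u hu] at h2
    simpa using h2

/-- Upper bound: every 2-temporal matching has size at most `α(G) + |E(G)|`. -/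
lemma tm_card_le {V : Type*} [Fintype V] [DecidableEq V]
    (G : SimpleGraph V) [DecidableRel G.Adj]
    (c : Sym2 V → ℕ)
    (lab : Sym2 ((V × Bool) ⊕ Sym2 V) → Finset ℕ) (hcons : IsConstruction G c lab)
    (M : Finset (Sym2 ((V × Bool) ⊕ Sym2 V) × ℕ)) (hM : IsTM lab 2 M) :
    M.card ≤ indepNum G + G.edgeFinset.card := by
  classical
  have hcls : ∀ p ∈ M, (∃ v : V, p = (vedge v, 2)) ∨
      (∃ e ∈ G.edgeSet, ∃ u, u ∈ e ∧ p = (eedge c e u, tE c e)) :=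
    fun p hp => classify hcons (hM.1 p hp)
  set T : Finset V := Finset.univ.filter (fun v => ((vedge v, 2) : Sym2 _ × ℕ) ∈ M) with hTdef
  set A : Finset (Sym2 ((V × Bool) ⊕ Sym2 V) × ℕ) := M.filter (fun p => p.2 = 2) with hAdef
  set B : Finset (Sym2 ((V × Bool) ⊕ Sym2 V) × ℕ) := M.filter (fun p => ¬ p.2 = 2) with hBdef
  have hAB : A.card + B.card = M.card := by
    rw [hAdef, hBdef]
    exact Finset.card_filter_add_card_filter_not (s := M) (fun p => p.2 = 2)
  -- A is the image of T
  have hAeq : A = T.image (fun v => ((vedge v, 2) : Sym2 _ × ℕ)) := by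
    ext p
    simp only [hAdef, hTdef, Finset.mem_filter, Finset.mem_image, Finset.mem_univ, true_and]
    constructor
    · rintro ⟨hp, h2⟩
      rcases hcls p hp with ⟨v, rfl⟩ | ⟨e, he, u, hu, rfl⟩
      · exact ⟨v, hp, rfl⟩
      · exfalso; rcases tE_cases c e with h | h <;> simp [h] at h2
    · rintro ⟨v, hv, rfl⟩; exact ⟨hv, rfl⟩
  have hvinj : Function.Injective (fun v : V => ((vedge v, 2) : Sym2 _ × ℕ)) := by
    intro a b h
    simp only [Prod.mk.injEq, Sym2.eq_iff, Sum.inl.injEq, Prod.mk.injEq] at h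
    tauto
  have hTA : A.card = T.card := by
    rw [hAeq, Finset.card_image_of_injective _ hvinj]
  -- edges used by B
  set EB : Finset (Sym2 V) :=
    G.edgeFinset.filter (fun e => ∃ p ∈ B, (Sum.inr e : (V × Bool) ⊕ Sym2 V) ∈ p.1) with hEBdef
  -- B injects into EB
  have hBE : B.card ≤ EB.card := by
    apply Finset.card_le_card_of_surjOn
      (fun e => if ((eedge c e e.out.1, tE c e) : Sym2 _ × ℕ) ∈ M
        then ((eedge c e e.out.1, tE c e) : Sym2 _ × ℕ) else (eedge c e e.out.2, tE c e))
    intro p hp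
    have hp' : p ∈ B := hp
    rw [hBdef, Finset.mem_filter] at hp'
    obtain ⟨hpM, hp2⟩ := hp'
    rcases hcls p hpM with ⟨v, rfl⟩ | ⟨e, he, u, hu, rfl⟩
    · exact absurd rfl hp2
    · refine ⟨e, ?_, ?_⟩
      · refine Finset.mem_coe.2 (Finset.mem_filter.2 ⟨SimpleGraph.mem_edgeFinset.2 he,
          ⟨(eedge c e u, tE c e), hp, Sym2.mem_mk_left _ _⟩⟩)
      · have hu2 : u = e.out.1 ∨ u = e.out.2 := by
          have h := sym2_mk_out e
          rw [← h] at hu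
          exact Sym2.mem_iff.1 hu
        show (if ((eedge c e e.out.1, tE c e) : Sym2 _ × ℕ) ∈ M
          then ((eedge c e e.out.1, tE c e) : Sym2 _ × ℕ) else (eedge c e e.out.2, tE c e))
          = (eedge c e u, tE c e)
        rcases hu2 with rfl | rfl
        · rw [if_pos hpM]
        · by_cases h1 : ((eedge c e e.out.1, tE c e) : Sym2 _ × ℕ) ∈ M
          · rw [if_pos h1]
            by_cases heq : ((eedge c e e.out.1, tE c e) : Sym2 _ × ℕ) = (eedge c e e.out.2, tE c e)
            · exact heq
            · exfalso
              rcases hM.2 _ h1 _ hpM heq with hdis | habs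
              · exact hdis (Sum.inr e) (Sym2.mem_mk_left _ _) (Sym2.mem_mk_left _ _)
              · simp at habs
          · rw [if_neg h1]
  have hEBsub : EB ⊆ G.edgeFinset := Finset.filter_subset _ _
  -- every edge of EB has an endpoint outside T
  have hEB : ∀ e ∈ EB, ∃ u, u ∈ e ∧ u ∉ T := by
    intro e heB
    rw [hEBdef, Finset.mem_filter] at heB
    obtain ⟨heF, p, hpB, hpe⟩ := heB
    rw [hBdef, Finset.mem_filter] at hpB
    obtain ⟨hpM, hp2⟩ := hpB
    rcases hcls p hpM with ⟨v, rfl⟩ | ⟨e', he', u, hu, rfl⟩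
    · exact absurd rfl hp2
    · have hee : e = e' := by
        rcases Sym2.mem_iff.1 hpe with h | h
        · exact Sum.inr.inj h
        · exact absurd h (by simp)
      subst hee
      refine ⟨u, hu, ?_⟩
      intro huT
      rw [hTdef, Finset.mem_filter] at huT
      have hq : ((vedge u, 2) : Sym2 _ × ℕ) ∈ M := huT.2
      have hne : ((eedge c e u, tE c e) : Sym2 _ × ℕ) ≠ (vedge u, 2) := by
        intro h
        exact hp2 (congrArg Prod.snd h)
      rcases hM.2 _ hpM _ hq hne with hdis | habs
      · exact hdis (Sum.inl (u, aV c e)) (Sym2.mem_mk_right _ _) (mem_vedge_side u _)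
      · rcases tE_cases c e with h | h <;> rw [h] at habs <;> norm_num at habs
  -- apply the independent-set bound with F = edgeFinset \ EB
  have hkey : T.card ≤ indepNum G + (G.edgeFinset \ EB).card := by
    refine card_le_indep_add G T _ ?_
    intro e he hall
    refine Finset.mem_sdiff.2 ⟨he, ?_⟩
    intro heB
    obtain ⟨u, hu, huT⟩ := hEB e heB
    exact huT (hall u hu)
  have hsdiff : (G.edgeFinset \ EB).card = G.edgeFinset.card - EB.card :=
    Finset.card_sdiff_of_subset hEBsub
  have hEBle : EB.card ≤ G.edgeFinset.card := Finset.card_le_card hEBsub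
  omega

/-- Lower bound: there is a 2-temporal matching of size `α(G) + |E(G)|`. -/
lemma tm_exists {V : Type*} [Fintype V] [DecidableEq V]
    (G : SimpleGraph V) [DecidableRel G.Adj]
    (c : Sym2 V → ℕ) (hc : ProperEC G c)
    (lab : Sym2 ((V × Bool) ⊕ Sym2 V) → Finset ℕ) (hcons : IsConstruction G c lab) :
    ∃ M : Finset (Sym2 ((V × Bool) ⊕ Sym2 V) × ℕ),
      IsTM lab 2 M ∧ M.card = indepNum G + G.edgeFinset.card := by
  classical
  obtain ⟨S, hS, hScard⟩ := exists_indep_card G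
  set pick : Sym2 V → V := fun e => if e.out.1 ∈ S then e.out.2 else e.out.1 with hpickdef
  have hpmem : ∀ e : Sym2 V, pick e ∈ e := by
    intro e
    rw [hpickdef]
    dsimp only
    split
    · exact e.out_snd_mem
    · exact e.out_fst_mem
  have hpS : ∀ e ∈ G.edgeSet, pick e ∉ S := by
    intro e he
    rw [hpickdef]
    dsimp only
    split
    · intro h2
      have hadj : G.Adj e.out.1 e.out.2 := by
        rw [← SimpleGraph.mem_edgeSet, sym2_mk_out]; exact he
      exact hS _ ‹e.out.1 ∈ S› _ h2 hadj
    · assumption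
  set M : Finset (Sym2 ((V × Bool) ⊕ Sym2 V) × ℕ) :=
    S.image (fun v => ((vedge v, 2) : Sym2 _ × ℕ)) ∪
    G.edgeFinset.image (fun e => ((eedge c e (pick e), tE c e) : Sym2 _ × ℕ)) with hMdef
  have hmem : ∀ p, p ∈ M ↔ (∃ v ∈ S, ((vedge v, 2) : Sym2 _ × ℕ) = p) ∨
      (∃ e ∈ G.edgeFinset, ((eedge c e (pick e), tE c e) : Sym2 _ × ℕ) = p) := by
    intro p
    simp [hMdef]
  -- disjointness of vedge / eedge things
  have hve : ∀ (v : V), ∀ e ∈ G.edgeSet, v ∈ S →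
      ∀ x, x ∈ vedge v → x ∉ eedge c e (pick e) := by
    intro v e he hv x hx hx'
    rcases Sym2.mem_iff.1 hx with rfl | rfl
    · rcases Sym2.mem_iff.1 hx' with h | h
      · exact absurd h (by simp)
      · simp only [Sum.inl.injEq, Prod.mk.injEq] at h
        exact hpS e he (h.1 ▸ hv)
    · rcases Sym2.mem_iff.1 hx' with h | h
      · exact absurd h (by simp)
      · simp only [Sum.inl.injEq, Prod.mk.injEq] at h
        exact hpS e he (h.1 ▸ hv)
  refine ⟨M, ⟨?_, ?_⟩, ?_⟩
  · -- time edges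
    intro p hp
    rcases (hmem p).1 hp with ⟨v, hv, rfl⟩ | ⟨e, he, rfl⟩
    · constructor
      · simp
      · rw [hcons.1 v]; simp
    · constructor
      · simp
      · rw [hcons.2.1 e (SimpleGraph.mem_edgeFinset.1 he) (pick e) (hpmem e)]; simp
  · -- pairwise DIndep
    intro p hp q hq hne
    rcases (hmem p).1 hp with ⟨v, hv, rfl⟩ | ⟨e, he, rfl⟩ <;>
      rcases (hmem q).1 hq with ⟨v', hv', rfl⟩ | ⟨e', he', rfl⟩
    · -- vertex-vertex
      have hvv : v ≠ v' := by rintro rfl; exact hne rfl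
      left
      intro x hx hx'
      rcases Sym2.mem_iff.1 hx with rfl | rfl <;>
        rcases Sym2.mem_iff.1 hx' with h | h <;>
        (simp only [Sum.inl.injEq, Prod.mk.injEq] at h; exact hvv h.1)
    · -- vertex-edge
      left
      exact hve v e' (SimpleGraph.mem_edgeFinset.1 he') hv
    · -- edge-vertex
      left
      intro x hx hx'
      exact hve v' e (SimpleGraph.mem_edgeFinset.1 he) hv' x hx' hx
    · -- edge-edge
      have hee : e ≠ e' := by rintro rfl; exact hne rfl
      by_cases htt : tE c e = tE c e'
      · left
        intro x hx hx'
        rcases Sym2.mem_iff.1 hx with rfl | rfl <;>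
          rcases Sym2.mem_iff.1 hx' with h | h
        · exact hee (Sum.inr.inj h)
        · exact absurd h (by simp)
        · exact absurd h (by simp)
        · simp only [Sum.inl.injEq, Prod.mk.injEq] at h
          have hcc : c e ≠ c e' := by
            refine hc.2 e (SimpleGraph.mem_edgeFinset.1 he) e'
              (SimpleGraph.mem_edgeFinset.1 he') hee ⟨pick e, hpmem e, ?_⟩
            exact h.1 ▸ hpmem e'
          have hr1 := hc.1 e (SimpleGraph.mem_edgeFinset.1 he)
          have hr2 := hc.1 e' (SimpleGraph.mem_edgeFinset.1 he')
          have ha : (c e % 2 == 1) = (c e' % 2 == 1) := h.2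
          have ht' : (if c e ≤ 2 then 1 else 3 : ℕ) = if c e' ≤ 2 then 1 else 3 := htt
          exact hcc (color_eq_aux hr1.1 hr1.2 hr2.1 hr2.2 ht' ha)
      · right
        show 2 ≤ ((tE c e : ℤ) - (tE c e' : ℤ)).natAbs
        rcases tE_cases c e with h1 | h1 <;> rcases tE_cases c e' with h2 | h2 <;>
          rw [h1, h2] <;>
          first
            | exact absurd (h1.trans h2.symm) htt
            | norm_num
  · -- cardinality
    have hd : Disjoint (S.image fun v => ((vedge v, 2) : Sym2 _ × ℕ))
        (G.edgeFinset.image fun e => ((eedge c e (pick e), tE c e) : Sym2 _ × ℕ)) := by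
      rw [Finset.disjoint_left]
      rintro p hp1 hp2
      simp only [Finset.mem_image] at hp1 hp2
      obtain ⟨v, hv, rfl⟩ := hp1
      obtain ⟨e, he, hpe⟩ := hp2
      have h := congrArg Prod.fst hpe
      simp only [Sym2.eq_iff] at h
      rcases h with ⟨h1, -⟩ | ⟨h1, -⟩ <;> exact absurd h1 (by simp)
    have heinj : Function.Injective
        (fun e : Sym2 V => ((eedge c e (pick e), tE c e) : Sym2 _ × ℕ)) := by
      intro a b h
      have h1 := congrArg Prod.fst h
      simp only [Sym2.eq_iff] at h1
      rcases h1 with ⟨h2, -⟩ | ⟨h2, -⟩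
      · exact Sum.inr.inj h2
      · exact absurd h2 (by simp)
    have hvinj : Function.Injective (fun v : V => ((vedge v, 2) : Sym2 _ × ℕ)) := by
      intro a b h
      simp only [Prod.mk.injEq, Sym2.eq_iff, Sum.inl.injEq, Prod.mk.injEq] at h
      tauto
    rw [hMdef, Finset.card_union_of_disjoint hd, Finset.card_image_of_injective _ hvinj,
      Finset.card_image_of_injective _ heinj, hScard]

end Aux

/-- For a cubic graph `G` on `n` vertices with a proper 4-edge-coloring `c`
and the temporal graph `(H,λ)` of the Construction, `μ₂(H,λ) = α(G) + 3n/2`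
(stated multiplied by 2 to avoid division). -/
theorem stmt6 {V : Type*} [Fintype V] [DecidableEq V]
    (G : SimpleGraph V) [DecidableRel G.Adj] (hcubic : ∀ v : V, G.degree v = 3)
    (c : Sym2 V → ℕ) (hc : ProperEC G c)
    (lab : Sym2 ((V × Bool) ⊕ Sym2 V) → Finset ℕ) (hcons : IsConstruction G c lab) :
    2 * tmu lab 2 = 2 * indepNum G + 3 * Fintype.card V := by
  classical
  have hub : ∀ k ∈ {k | ∃ M : Finset (Sym2 ((V × Bool) ⊕ Sym2 V) × ℕ),
      IsTM lab 2 M ∧ M.card = k}, k ≤ indepNum G + G.edgeFinset.card := by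
    rintro k ⟨M, hM, rfl⟩
    exact tm_card_le G c lab hcons M hM
  obtain ⟨M, hM, hMc⟩ := tm_exists G c hc lab hcons
  have h1 : tmu lab 2 = indepNum G + G.edgeFinset.card := by
    apply le_antisymm
    · exact csSup_le ⟨M.card, M, hM, rfl⟩ hub
    · exact le_csSup ⟨_, hub⟩ ⟨M, hM, hMc⟩
  have h2 : 3 * Fintype.card V = 2 * G.edgeFinset.card := by
    have h := G.sum_degrees_eq_twice_card_edges
    simp only [hcubic, Finset.sum_const, smul_eq_mul, Finset.card_univ] at h
    omega
  rw [h1]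
  omega
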